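/- Let F be a positive CNF formula with k variables and n ≥ 1 clauses (each clause a nonempty subset of the variables), where k is odd. Then the connected domination number of G_F satisfies γ_c(G_F) = 3k + 3n + 11. -/

import Mathlib

namespace CDG

/-- Vertices of the graph `B`. -/
inductive BVert : Type
  | a | e | b | b' | h | k | f1 | g1 | f2 | g2

/-- The edges of the graph `B`. -/
def BRel : BVert → BVert → Prop
  | .a, .e => True
  | .e, .b => True
  | .b, .b' => True
  | .a, .h => True
  | .h, .e => True
  | .e, .f1 => True
  | .f1, .b => True
  | .b, .f2 => True
  | .f2, .e => True
  | .e, .g1 => True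
  | .g1, .f1 => True
  | .e, .g2 => True
  | .g2, .f2 => True
  | .h, .k => True
  | .k, .a => True
  | _, _ => False

/-- The graph `B`. -/
def graphB : SimpleGraph BVert := SimpleGraph.fromRel BRel

/-- `S` is a connected dominating set of `G`: every vertex is in `S` or adjacent to a
vertex of `S`, and the subgraph induced by `S` is connected. -/
def IsConnDomSet {V : Type*} (G : SimpleGraph V) (S : Set V) : Prop :=
  (∀ v : V, v ∈ S ∨ ∃ u ∈ S, G.Adj u v) ∧ (G.induce S).Connected

/-- The connected domination number of `G`. -/
noncomputable def connDomNum {V : Type*} (G : SimpleGraph V) : ℕ :=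
  sInf {m | ∃ S : Set V, IsConnDomSet G S ∧ S.ncard = m}

/-- Vertices of the graph `H n`: `u i` is `u_i` for `0 ≤ i ≤ n+1`, `x t` is `x_{t+1}` and
`y t` is `y_{t+1}` for `0 ≤ t ≤ n-2`. -/
inductive HVert (n : ℕ) : Type
  | u : Fin (n + 2) → HVert n
  | x : Fin (n - 1) → HVert n
  | y : Fin (n - 1) → HVert n

/-- The edges of the graph `H n`. -/
def HRel (n : ℕ) : HVert n → HVert n → Prop
  | .u i, .u j => (j : ℕ) = (i : ℕ) + 1
  | .u i, .x t => (i : ℕ) = (t : ℕ) + 1 ∨ (i : ℕ) = (t : ℕ) + 2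
  | .x t, .y s => t = s
  | .y s, .u i => (i : ℕ) = (s : ℕ) + 2
  | _, _ => False

/-- The graph `H n`. -/
def graphH (n : ℕ) : SimpleGraph (HVert n) := SimpleGraph.fromRel (HRel n)

/-- Vertices of the graph `C m`: `cc i` is `c^{i+1}` and `dd i` is `d^{i+1}` for `0 ≤ i ≤ m-1`. -/
inductive CVert (m : ℕ) : Type
  | c : CVert m
  | d : CVert m
  | cc : Fin m → CVert m
  | dd : Fin m → CVert m

/-- The edges of the graph `C m`. -/
def CRel (m : ℕ) : CVert m → CVert m → Prop
  | .c, .d => True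
  | .c, .dd _ => True
  | .cc i, .dd j => i = j
  | _, _ => False

/-- The graph `C m`. -/
def graphC (m : ℕ) : SimpleGraph (CVert m) := SimpleGraph.fromRel (CRel m)

/-- Vertices of the graph `A`. -/
inductive AVert : Type
  | p1 | p2 | p3 | q1 | q2 | r1 | r2

/-- The edges of the graph `A`. -/
def ARel : AVert → AVert → Prop
  | .p1, .p2 => True
  | .p2, .p3 => True
  | .p1, .q1 => True
  | .q1, .r1 => True
  | .p2, .q1 => True
  | .p2, .r1 => True
  | .p2, .q2 => True
  | .q2, .r2 => True
  | .p3, .q2 => True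
  | .p3, .r2 => True
  | _, _ => False

/-- Vertices of the graph `G_F`, for a formula with `k` variables and `n` clauses:
`k` copies of `B`, `n` copies of `C n`, one copy of `H (2n+7)`, and a copy of `A`
exactly when `k` is odd (realized as `AVert × Fin (k % 2)`). -/
abbrev GVert (k n : ℕ) : Type :=
  (Fin k × BVert) ⊕ (Fin n × CVert n) ⊕ HVert (2 * n + 7) ⊕ (AVert × Fin (k % 2))

/-- The edges of the graph `G_F`, where the formula `F` assigns to each clause `j`
the (nonempty) set of variables appearing in it. -/
def GRel (k n : ℕ) (F : Fin n → Finset (Fin k)) : GVert k n → GVert k n → Prop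
  | .inl (i, v), .inl (i', w) => i = i' ∧ BRel v w
  | .inr (.inl (j, v)), .inr (.inl (j', w)) => j = j' ∧ CRel n v w
  | .inr (.inr (.inl v)), .inr (.inr (.inl w)) => HRel (2 * n + 7) v w
  | .inr (.inr (.inr (v, _))), .inr (.inr (.inr (w, _))) => ARel v w
  | .inr (.inl (j, v)), .inl (i, w) =>
      i ∈ F j ∧ w = .a ∧ (v = .c ∨ ∃ t, v = .cc t)
  | .inr (.inr (.inl v)), .inl (i, w) =>
      v = .u ⟨0, by omega⟩ ∧ (w = .a ∨ w = .b)
  | .inr (.inr (.inr (v, _))), .inr (.inr (.inl w)) =>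
      v = .p1 ∧ w = .u ⟨0, by omega⟩
  | _, _ => False

/-- The graph `G_F`. -/
def graphGF (k n : ℕ) (F : Fin n → Finset (Fin k)) : SimpleGraph (GVert k n) :=
  SimpleGraph.fromRel (GRel k n F)

/-- Vertices of the graph `G'_F`, for a formula with `k` variables and `n` clauses:
`k` copies of `B`, `n` copies of `C n`, one copy of `H 6`, and a copy of `A`
exactly when `k` is odd (realized as `AVert × Fin (k % 2)`). -/
abbrev GVert' (k n : ℕ) : Type :=
  (Fin k × BVert) ⊕ (Fin n × CVert n) ⊕ HVert 6 ⊕ (AVert × Fin (k % 2))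

/-- The edges of the graph `G'_F`. -/
def GRel' (k n : ℕ) (F : Fin n → Finset (Fin k)) : GVert' k n → GVert' k n → Prop
  | .inl (i, v), .inl (i', w) => i = i' ∧ BRel v w
  | .inr (.inl (j, v)), .inr (.inl (j', w)) => j = j' ∧ CRel n v w
  | .inr (.inr (.inl v)), .inr (.inr (.inl w)) => HRel 6 v w
  | .inr (.inr (.inr (v, _))), .inr (.inr (.inr (w, _))) => ARel v w
  | .inr (.inl (j, v)), .inl (i, w) =>
      i ∈ F j ∧ w = .a ∧ (v = .c ∨ ∃ t, v = .cc t)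
  | .inr (.inr (.inl v)), .inl (i, w) =>
      v = .u ⟨7, by omega⟩ ∧ (w = .a ∨ w = .b)
  | .inr (.inr (.inr (v, _))), .inr (.inr (.inl w)) =>
      v = .p1 ∧ w = .u ⟨7, by omega⟩
  | _, _ => False

/-- The graph `G'_F`. -/
def graphGF' (k n : ℕ) (F : Fin n → Finset (Fin k)) : SimpleGraph (GVert' k n) :=
  SimpleGraph.fromRel (GRel' k n F)

deriving instance DecidableEq for BVert
instance : Fintype BVert :=
  ⟨{.a, .e, .b, .b', .h, .k, .f1, .g1, .f2, .g2}, fun x => by cases x <;> decide⟩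
deriving instance DecidableEq, Fintype for CVert
deriving instance DecidableEq, Fintype for HVert
deriving instance DecidableEq for AVert
instance : Fintype AVert :=
  ⟨{.p1, .p2, .p3, .q1, .q2, .r1, .r2}, fun x => by cases x <;> decide⟩

lemma three_le_card {α : Type*} [DecidableEq α] {U : Finset α} {x y z : α}
    (hx : x ∈ U) (hy : y ∈ U) (hz : z ∈ U)
    (h1 : x ≠ y) (h2 : x ≠ z) (h3 : y ≠ z) : 3 ≤ U.card := by
  have hsub : ({x, y, z} : Finset α) ⊆ U := by
    intro w hw; simp only [Finset.mem_insert, Finset.mem_singleton] at hw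
    rcases hw with rfl | rfl | rfl <;> assumption
  have : ({x, y, z} : Finset α).card = 3 := by
    rw [Finset.card_insert_of_notMem (by simp [h1, h2]),
      Finset.card_insert_of_notMem (by simp [h3]), Finset.card_singleton]
  calc 3 = ({x, y, z} : Finset α).card := this.symm
    _ ≤ U.card := Finset.card_le_card hsub


lemma bvert_hit : ∀ U : Finset BVert,
    (BVert.b ∈ U ∨ BVert.b' ∈ U) → (BVert.h ∈ U ∨ BVert.a ∈ U ∨ BVert.k ∈ U) →
    (BVert.e ∈ U ∨ BVert.f1 ∈ U ∨ BVert.g1 ∈ U) →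
    (BVert.e ∈ U ∨ BVert.f2 ∈ U ∨ BVert.g2 ∈ U) →
    3 ≤ U.card := by
  intro U h1 h2 h3 h4
  by_cases he : BVert.e ∈ U
  · rcases h1 with hb | hb <;> rcases h2 with hk | hk | hk <;>
      exact three_le_card he hb hk (by decide) (by decide) (by decide)
  · have h3' : BVert.f1 ∈ U ∨ BVert.g1 ∈ U := by tauto
    have h4' : BVert.f2 ∈ U ∨ BVert.g2 ∈ U := by tauto
    rcases h1 with hb | hb <;> rcases h3' with hf | hf <;> rcases h4' with hg | hg <;>
      exact three_le_card hb hf hg (by decide) (by decide) (by decide)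

/-- intermediate value along a walk -/
lemma walk_exists_value {V : Type*} {G : SimpleGraph V} (f : V → ℕ)
    (hf : ∀ {x y}, G.Adj x y → f y ≤ f x + 1) {a b : V} (w : G.Walk a b) :
    ∀ m, f a ≤ m → m ≤ f b → ∃ v ∈ w.support, f v = m := by
  induction w with
  | nil => exact fun m h1 h2 => ⟨_, by simp, le_antisymm h1 h2⟩
  | @cons x y z h p ih =>
    intro m h1 h2
    rcases eq_or_lt_of_le h1 with he | hlt
    · exact ⟨x, by simp, he⟩
    · obtain ⟨v, hv, hvm⟩ := ih m (by have := hf h; omega) h2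
      exact ⟨v, by simp [hv], hvm⟩

def phi {k n : ℕ} : GVert k n → ℕ
  | .inr (.inr (.inl (.u i))) => (i : ℕ) + 1
  | .inr (.inr (.inl (.x t))) => (t : ℕ) + 2
  | .inr (.inr (.inl (.y t))) => (t : ℕ) + 3
  | _ => 0

def key {k n : ℕ} : GVert k n → Fin k ⊕ Fin n ⊕ Bool
  | .inl (i, _) => .inl i
  | .inr (.inl (j, _)) => .inr (.inl j)
  | .inr (.inr (.inl _)) => .inr (.inr true)
  | .inr (.inr (.inr _)) => .inr (.inr false)

def u0vert (k n : ℕ) : GVert k n := .inr (.inr (.inl (.u ⟨0, by omega⟩)))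

lemma key_of_phi_pos {k n : ℕ} {v : GVert k n} (h : 1 ≤ phi v) :
    key v = .inr (.inr true) := by
  rcases v with ⟨i, bv⟩ | ⟨j, cv⟩ | hv | ⟨av, z⟩ <;> simp [phi, key] at h ⊢
section Adj
variable {k n : ℕ} {F : Fin n → Finset (Fin k)}

lemma grel_phi : ∀ {v w : GVert k n}, GRel k n F v w →
    phi w ≤ phi v + 1 ∧ phi v ≤ phi w + 1 := by
  rintro (⟨i, bv⟩ | ⟨j, cv⟩ | hv | ⟨av, z⟩) (⟨i', bv'⟩ | ⟨j', cv'⟩ | hv' | ⟨av', z'⟩) hrel <;>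
    simp only [GRel] at hrel <;>
    first
      | exact absurd hrel not_false
      | (rcases hv with i | t | t <;> rcases hv' with i' | t' | t' <;>
          simp only [HRel] at hrel <;> simp [phi] <;> omega)
      | (obtain ⟨-, rfl⟩ := hrel; simp [phi])
      | (obtain ⟨rfl, -⟩ := hrel; simp [phi])
      | simp [phi]

lemma adj_phi {v w : GVert k n} (h : (graphGF k n F).Adj v w) : phi w ≤ phi v + 1 := by
  rw [graphGF, SimpleGraph.fromRel_adj] at h
  rcases h.2 with h' | h'
  · exact (grel_phi h').1
  · exact (grel_phi h').2

end Adj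
section Nbhd
variable {k n : ℕ} {F : Fin n → Finset (Fin k)}

lemma adj_inl {i : Fin k} {bv : BVert} {u : GVert k n}
    (h : (graphGF k n F).Adj u (.inl (i, bv))) :
    (∃ bw, u = .inl (i, bw) ∧ (BRel bw bv ∨ BRel bv bw)) ∨
    (∃ j cv, u = .inr (.inl (j, cv)) ∧ i ∈ F j ∧ bv = .a ∧ (cv = .c ∨ ∃ t, cv = .cc t)) ∨
    (u = u0vert k n ∧ (bv = .a ∨ bv = .b)) := by
  rw [graphGF, SimpleGraph.fromRel_adj] at h
  obtain ⟨hne, h | h⟩ := h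
  · rcases u with ⟨i', bv'⟩ | ⟨j', cv'⟩ | hv | ⟨av, z⟩ <;> simp only [GRel] at h
    · obtain ⟨rfl, hb⟩ := h; exact .inl ⟨bv', rfl, .inl hb⟩
    · exact .inr (.inl ⟨j', cv', rfl, h.1, h.2.1, h.2.2⟩)
    · obtain ⟨rfl, hw⟩ := h; exact .inr (.inr ⟨rfl, hw⟩)
  · rcases u with ⟨i', bv'⟩ | ⟨j', cv'⟩ | hv | ⟨av, z⟩ <;> simp only [GRel] at h
    obtain ⟨rfl, hb⟩ := h; exact .inl ⟨bv', rfl, .inr hb⟩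

lemma adj_inrC {j : Fin n} {cv : CVert n} {u : GVert k n}
    (h : (graphGF k n F).Adj u (.inr (.inl (j, cv)))) :
    (∃ cw, u = .inr (.inl (j, cw)) ∧ (CRel n cw cv ∨ CRel n cv cw)) ∨
    (∃ i, u = .inl (i, .a) ∧ i ∈ F j ∧ (cv = .c ∨ ∃ t, cv = .cc t)) := by
  rw [graphGF, SimpleGraph.fromRel_adj] at h
  obtain ⟨hne, h | h⟩ := h
  · rcases u with ⟨i', bv'⟩ | ⟨j', cv'⟩ | hv | ⟨av, z⟩ <;> simp only [GRel] at h
    obtain ⟨rfl, hc⟩ := h; exact .inl ⟨cv', rfl, .inl hc⟩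
  · rcases u with ⟨i', bv'⟩ | ⟨j', cv'⟩ | hv | ⟨av, z⟩ <;> simp only [GRel] at h
    · obtain ⟨hF', rfl, hopt⟩ := h; exact .inr ⟨i', rfl, hF', hopt⟩
    · obtain ⟨rfl, hc⟩ := h; exact .inl ⟨cv', rfl, .inr hc⟩

lemma adj_inrH {hw : HVert (2 * n + 7)} {u : GVert k n}
    (h : (graphGF k n F).Adj u (.inr (.inr (.inl hw)))) :
    (∃ hv, u = .inr (.inr (.inl hv)) ∧ (HRel (2 * n + 7) hv hw ∨ HRel (2 * n + 7) hw hv)) ∨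
    ((∃ i, u = .inl (i, .a) ∨ u = .inl (i, .b)) ∧ hw = .u ⟨0, by omega⟩) ∨
    ((∃ z, u = .inr (.inr (.inr (.p1, z)))) ∧ hw = .u ⟨0, by omega⟩) := by
  rw [graphGF, SimpleGraph.fromRel_adj] at h
  obtain ⟨hne, h | h⟩ := h
  · rcases u with ⟨i', bv'⟩ | ⟨j', cv'⟩ | hv | ⟨av, z⟩ <;> simp only [GRel] at h
    · exact .inl ⟨hv, rfl, .inl h⟩
    · obtain ⟨rfl, rfl⟩ := h; exact .inr (.inr ⟨⟨z, rfl⟩, rfl⟩)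
  · rcases u with ⟨i', bv'⟩ | ⟨j', cv'⟩ | hv | ⟨av, z⟩ <;> simp only [GRel] at h
    · obtain ⟨rfl, hab⟩ := h
      rcases hab with rfl | rfl
      · exact .inr (.inl ⟨⟨i', .inl rfl⟩, rfl⟩)
      · exact .inr (.inl ⟨⟨i', .inr rfl⟩, rfl⟩)
    · exact .inl ⟨hv, rfl, .inr h⟩

lemma adj_inrA {av : AVert} {z : Fin (k % 2)} {u : GVert k n}
    (h : (graphGF k n F).Adj u (.inr (.inr (.inr (av, z))))) :
    (∃ aw z', u = .inr (.inr (.inr (aw, z'))) ∧ (ARel aw av ∨ ARel av aw)) ∨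
    (u = u0vert k n ∧ av = .p1) := by
  rw [graphGF, SimpleGraph.fromRel_adj] at h
  obtain ⟨hne, h | h⟩ := h
  · rcases u with ⟨i', bv'⟩ | ⟨j', cv'⟩ | hv | ⟨av', z'⟩ <;> simp only [GRel] at h
    exact .inl ⟨av', z', rfl, .inl h⟩
  · rcases u with ⟨i', bv'⟩ | ⟨j', cv'⟩ | hv | ⟨av', z'⟩ <;> simp only [GRel] at h
    · obtain ⟨rfl, rfl⟩ := h; exact .inr ⟨rfl, rfl⟩
    · exact .inl ⟨av', z', rfl, .inr h⟩

end Nbhd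
section Nbhd2
variable {k n : ℕ} {F : Fin n → Finset (Fin k)}

lemma adj_b' {i : Fin k} {u : GVert k n}
    (h : (graphGF k n F).Adj u (.inl (i, .b'))) : u = .inl (i, .b) := by
  rcases adj_inl h with ⟨bw, rfl, hb | hb⟩ | ⟨j, cv, rfl, -, hc, -⟩ | ⟨-, hc | hc⟩
  · cases bw <;> first | exact absurd hb not_false | rfl
  · cases bw <;> exact absurd hb not_false
  · exact absurd hc (by simp)
  · exact absurd hc (by simp)
  · exact absurd hc (by simp)

lemma adj_k {i : Fin k} {u : GVert k n}
    (h : (graphGF k n F).Adj u (.inl (i, .k))) :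
    u = .inl (i, .h) ∨ u = .inl (i, .a) := by
  rcases adj_inl h with ⟨bw, rfl, hb | hb⟩ | ⟨j, cv, rfl, -, hc, -⟩ | ⟨-, hc | hc⟩
  · cases bw <;> first | exact absurd hb not_false | exact .inl rfl
  · cases bw <;> first | exact absurd hb not_false | exact .inr rfl
  · exact absurd hc (by simp)
  · exact absurd hc (by simp)
  · exact absurd hc (by simp)

lemma adj_g1 {i : Fin k} {u : GVert k n}
    (h : (graphGF k n F).Adj u (.inl (i, .g1))) :
    u = .inl (i, .e) ∨ u = .inl (i, .f1) := by
  rcases adj_inl h with ⟨bw, rfl, hb | hb⟩ | ⟨j, cv, rfl, -, hc, -⟩ | ⟨-, hc | hc⟩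
  · cases bw <;> first | exact absurd hb not_false | exact .inl rfl
  · cases bw <;> first | exact absurd hb not_false | exact .inr rfl
  · exact absurd hc (by simp)
  · exact absurd hc (by simp)
  · exact absurd hc (by simp)

lemma adj_g2 {i : Fin k} {u : GVert k n}
    (h : (graphGF k n F).Adj u (.inl (i, .g2))) :
    u = .inl (i, .e) ∨ u = .inl (i, .f2) := by
  rcases adj_inl h with ⟨bw, rfl, hb | hb⟩ | ⟨j, cv, rfl, -, hc, -⟩ | ⟨-, hc | hc⟩
  · cases bw <;> first | exact absurd hb not_false | exact .inl rfl
  · cases bw <;> first | exact absurd hb not_false | exact .inr rfl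
  · exact absurd hc (by simp)
  · exact absurd hc (by simp)
  · exact absurd hc (by simp)

lemma adj_d {j : Fin n} {u : GVert k n}
    (h : (graphGF k n F).Adj u (.inr (.inl (j, .d)))) :
    u = .inr (.inl (j, .c)) := by
  rcases adj_inrC h with ⟨cw, rfl, hc | hc⟩ | ⟨i, rfl, -, hc | ⟨t, hc⟩⟩
  · cases cw <;> first | exact absurd hc not_false | rfl
  · cases cw <;> exact absurd hc not_false
  · exact absurd hc (by simp)
  · exact absurd hc (by simp)

lemma adj_utop {u : GVert k n}
    (h : (graphGF k n F).Adj u (.inr (.inr (.inl (.u ⟨2 * n + 8, by omega⟩))))) :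
    u = .inr (.inr (.inl (.u ⟨2 * n + 7, by omega⟩))) := by
  rcases adj_inrH h with ⟨hv, rfl, hrel | hrel⟩ | ⟨-, hc⟩ | ⟨-, hc⟩
  · rcases hv with i | t | t <;> simp only [HRel] at hrel <;> simp at hrel
    · have : i = (⟨2 * n + 7, by omega⟩ : Fin (2 * n + 7 + 2)) := by
        apply Fin.ext; simp; omega
      rw [this]
    · exact absurd hrel (by have := t.isLt; omega)
  · rcases hv with i | t | t <;> simp only [HRel] at hrel <;> (try simp at hrel)
    · exact absurd hrel (by have := i.isLt; omega)
    · exact absurd hrel (by have := t.isLt; omega)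
  · exact absurd hc (by simp [Fin.ext_iff])
  · exact absurd hc (by simp [Fin.ext_iff])

lemma adj_r1 {z : Fin (k % 2)} {u : GVert k n}
    (h : (graphGF k n F).Adj u (.inr (.inr (.inr (.r1, z))))) :
    ∃ z', u = .inr (.inr (.inr (.q1, z'))) ∨ u = .inr (.inr (.inr (.p2, z'))) := by
  rcases adj_inrA h with ⟨aw, z', rfl, ha | ha⟩ | ⟨-, hc⟩
  · cases aw <;> first | exact absurd ha not_false | exact ⟨z', .inl rfl⟩ | exact ⟨z', .inr rfl⟩
  · cases aw <;> exact absurd ha not_false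
  · exact absurd hc (by simp)

lemma adj_r2 {z : Fin (k % 2)} {u : GVert k n}
    (h : (graphGF k n F).Adj u (.inr (.inr (.inr (.r2, z))))) :
    ∃ z', u = .inr (.inr (.inr (.q2, z'))) ∨ u = .inr (.inr (.inr (.p3, z'))) := by
  rcases adj_inrA h with ⟨aw, z', rfl, ha | ha⟩ | ⟨-, hc⟩
  · cases aw <;> first | exact absurd ha not_false | exact ⟨z', .inl rfl⟩ | exact ⟨z', .inr rfl⟩
  · cases aw <;> exact absurd ha not_false
  · exact absurd hc (by simp)

end Nbhd2
section Upper
variable (k n : ℕ)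

def SB : Finset (GVert k n) :=
  (Finset.univ ×ˢ ({.a, .e, .b} : Finset BVert)).image Sum.inl

def SC : Finset (GVert k n) :=
  Finset.univ.image (fun j : Fin n => (Sum.inr (Sum.inl (j, CVert.c)) : GVert k n))

def SH : Finset (GVert k n) :=
  (Finset.univ : Finset (Fin (2 * n + 8))).image
    (fun m : Fin (2 * n + 8) =>
      (Sum.inr (Sum.inr (Sum.inl (HVert.u ⟨(m : ℕ), by have := m.isLt; omega⟩))) : GVert k n))

def SA (hk : k % 2 = 1) : Finset (GVert k n) :=
  ({.p1, .p2, .p3} : Finset AVert).image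
    (fun p => (Sum.inr (Sum.inr (Sum.inr (p, ⟨0, by omega⟩))) : GVert k n))

def S0 (hk : k % 2 = 1) : Finset (GVert k n) := SB k n ∪ SC k n ∪ SH k n ∪ SA k n hk

variable {k n}

lemma card_S0 (hk : k % 2 = 1) : (S0 k n hk).card = 3 * k + 3 * n + 11 := by
  have d1 : Disjoint (SB k n) (SC k n) := by
    simp [SB, SC, Finset.disjoint_left]
  have d2 : Disjoint (SB k n ∪ SC k n) (SH k n) := by
    simp [SB, SC, SH, Finset.disjoint_left, Finset.mem_union]
  have d3 : Disjoint (SB k n ∪ SC k n ∪ SH k n) (SA k n hk) := by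
    simp [SB, SC, SH, SA, Finset.disjoint_left, Finset.mem_union]
  rw [S0, Finset.card_union_of_disjoint d3, Finset.card_union_of_disjoint d2,
    Finset.card_union_of_disjoint d1]
  have c1 : (SB k n).card = k * 3 := by
    rw [SB, Finset.card_image_of_injective _ Sum.inl_injective]
    simp [Finset.card_product]
  have c2 : (SC k n).card = n := by
    rw [SC, Finset.card_image_of_injective, Finset.card_univ, Fintype.card_fin]
    intro a b hab; simpa using hab
  have c3 : (SH k n).card = 2 * n + 8 := by
    rw [SH, Finset.card_image_of_injective, Finset.card_univ, Fintype.card_fin]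
    intro a b hab
    simp only [Sum.inr.injEq, Sum.inl.injEq, HVert.u.injEq, Fin.mk.injEq] at hab
    exact Fin.ext hab
  have c4 : (SA k n hk).card = 3 := by
    rw [SA, Finset.card_image_of_injective]
    · decide
    · intro a b hab; simpa using hab
  rw [c1, c2, c3, c4]; ring

end Upper
section Upper2
variable {k n : ℕ} {F : Fin n → Finset (Fin k)}

lemma adj_of_grel {v w : GVert k n} (hne : v ≠ w) (h : GRel k n F v w) :
    (graphGF k n F).Adj v w := by
  rw [graphGF, SimpleGraph.fromRel_adj]; exact ⟨hne, .inl h⟩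

lemma memB (hk : k % 2 = 1) {i : Fin k} {bv : BVert}
    (h : bv = .a ∨ bv = .e ∨ bv = .b) : (Sum.inl (i, bv) : GVert k n) ∈ S0 k n hk := by
  simp only [S0, Finset.mem_union, SB]
  exact .inl (.inl (.inl (Finset.mem_image.2 ⟨(i, bv), by rcases h with rfl|rfl|rfl <;> simp, rfl⟩)))

lemma memC (hk : k % 2 = 1) {j : Fin n} :
    (Sum.inr (Sum.inl (j, CVert.c)) : GVert k n) ∈ S0 k n hk := by
  simp only [S0, Finset.mem_union, SC]
  exact .inl (.inl (.inr (Finset.mem_image.2 ⟨j, by simp, rfl⟩)))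

lemma memH (hk : k % 2 = 1) (m : ℕ) (hm : m ≤ 2 * n + 7) :
    (Sum.inr (Sum.inr (Sum.inl (HVert.u ⟨m, by omega⟩))) : GVert k n) ∈ S0 k n hk := by
  simp only [S0, Finset.mem_union, SH]
  exact .inl (.inr (Finset.mem_image.2 ⟨⟨m, by omega⟩, by simp, rfl⟩))

lemma memA (hk : k % 2 = 1) {p : AVert} {z : Fin (k % 2)}
    (h : p = .p1 ∨ p = .p2 ∨ p = .p3) :
    (Sum.inr (Sum.inr (Sum.inr (p, z))) : GVert k n) ∈ S0 k n hk := by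
  have hz : z = ⟨0, by omega⟩ := by apply Fin.ext; have := z.isLt; omega
  simp only [S0, Finset.mem_union, SA]
  exact .inr (Finset.mem_image.2 ⟨p, by rcases h with rfl|rfl|rfl <;> simp, by rw [hz]⟩)

lemma S0_dom (hk : k % 2 = 1) (hF : ∀ j, (F j).Nonempty) (v : GVert k n) :
    v ∈ (↑(S0 k n hk) : Set (GVert k n)) ∨
      ∃ u ∈ (↑(S0 k n hk) : Set (GVert k n)), (graphGF k n F).Adj u v := by
  simp only [Finset.coe_sort_coe, Finset.mem_coe]
  rcases v with ⟨i, bv⟩ | ⟨j, cv⟩ | hv | ⟨av, z⟩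
  · cases bv
    case a => exact .inl (memB hk (.inl rfl))
    case e => exact .inl (memB hk (.inr (.inl rfl)))
    case b => exact .inl (memB hk (.inr (.inr rfl)))
    case b' => exact .inr ⟨_, memB hk (.inr (.inr rfl)), adj_of_grel (by simp)
      (show GRel k n F (.inl (i, .b)) (.inl (i, .b')) by exact ⟨rfl, trivial⟩)⟩
    case h => exact .inr ⟨_, memB hk (.inl rfl), adj_of_grel (by simp)
      (show GRel k n F (.inl (i, .a)) (.inl (i, .h)) by exact ⟨rfl, trivial⟩)⟩
    case k => exact .inr ⟨_, memB hk (.inl rfl), (adj_of_grel (by simp)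
      (show GRel k n F (.inl (i, .k)) (.inl (i, .a)) by exact ⟨rfl, trivial⟩)).symm⟩
    case f1 => exact .inr ⟨_, memB hk (.inr (.inl rfl)), adj_of_grel (by simp)
      (show GRel k n F (.inl (i, .e)) (.inl (i, .f1)) by exact ⟨rfl, trivial⟩)⟩
    case f2 => exact .inr ⟨_, memB hk (.inr (.inr rfl)), adj_of_grel (by simp)
      (show GRel k n F (.inl (i, .b)) (.inl (i, .f2)) by exact ⟨rfl, trivial⟩)⟩
    case g1 => exact .inr ⟨_, memB hk (.inr (.inl rfl)), adj_of_grel (by simp)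
      (show GRel k n F (.inl (i, .e)) (.inl (i, .g1)) by exact ⟨rfl, trivial⟩)⟩
    case g2 => exact .inr ⟨_, memB hk (.inr (.inl rfl)), adj_of_grel (by simp)
      (show GRel k n F (.inl (i, .e)) (.inl (i, .g2)) by exact ⟨rfl, trivial⟩)⟩
  · cases cv
    case c => exact .inl (memC hk)
    case d => exact .inr ⟨_, memC hk, adj_of_grel (by simp)
      (show GRel k n F (.inr (.inl (j, .c))) (.inr (.inl (j, .d))) by exact ⟨rfl, trivial⟩)⟩
    case dd t => exact .inr ⟨_, memC hk, adj_of_grel (by simp)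
      (show GRel k n F (.inr (.inl (j, .c))) (.inr (.inl (j, .dd t))) by exact ⟨rfl, trivial⟩)⟩
    case cc t =>
      obtain ⟨i, hi⟩ := hF j
      exact .inr ⟨_, memB hk (.inl rfl), (adj_of_grel (by simp)
        (show GRel k n F (.inr (.inl (j, .cc t))) (.inl (i, .a)) by
          exact ⟨hi, rfl, .inr ⟨t, rfl⟩⟩)).symm⟩
  · rcases hv with i | t | t
    · by_cases hi : (i : ℕ) ≤ 2 * n + 7
      · refine .inl ?_
        have : HVert.u i = HVert.u ⟨(i : ℕ), by omega⟩ := congrArg HVert.u (Fin.ext rfl)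
        rw [show (Sum.inr (Sum.inr (Sum.inl (HVert.u i))) : GVert k n)
            = Sum.inr (Sum.inr (Sum.inl (HVert.u ⟨(i : ℕ), by omega⟩))) by rw [this]]
        exact memH hk _ hi
      · have hi8 : (i : ℕ) = 2 * n + 8 := by have := i.isLt; omega
        refine .inr ⟨_, memH hk (2 * n + 7) le_rfl,
          adj_of_grel ?_ (show HRel (2 * n + 7)
            (.u ⟨2 * n + 7, by omega⟩) (.u i) from show (i : ℕ) = 2 * n + 7 + 1 by omega)⟩
        intro hcon
        simp only [Sum.inr.injEq, Sum.inl.injEq, HVert.u.injEq] at hcon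
        rw [Fin.ext_iff] at hcon
        simp only [Fin.val_mk] at hcon
        omega
    · refine .inr ⟨_, memH hk ((t : ℕ) + 1) (by have := t.isLt; omega),
        adj_of_grel (by simp) (show HRel (2 * n + 7)
          (.u ⟨(t : ℕ) + 1, by have := t.isLt; omega⟩) (.x t) from Or.inl rfl)⟩
    · refine .inr ⟨_, memH hk ((t : ℕ) + 2) (by have := t.isLt; omega),
        (adj_of_grel (by simp) (show GRel k n F (.inr (.inr (.inl (.y t))))
          (.inr (.inr (.inl (.u ⟨(t : ℕ) + 2, by have := t.isLt; omega⟩)))) by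
            exact rfl)).symm⟩
  · cases av
    case p1 => exact .inl (memA hk (.inl rfl))
    case p2 => exact .inl (memA hk (.inr (.inl rfl)))
    case p3 => exact .inl (memA hk (.inr (.inr rfl)))
    case q1 => exact .inr ⟨_, memA hk (.inr (.inl rfl)), adj_of_grel (by simp)
      (show GRel k n F (.inr (.inr (.inr (.p2, z)))) (.inr (.inr (.inr (.q1, z)))) by
        exact trivial)⟩
    case r1 => exact .inr ⟨_, memA hk (.inr (.inl rfl)), adj_of_grel (by simp)
      (show GRel k n F (.inr (.inr (.inr (.p2, z)))) (.inr (.inr (.inr (.r1, z)))) by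
        exact trivial)⟩
    case q2 => exact .inr ⟨_, memA hk (.inr (.inl rfl)), adj_of_grel (by simp)
      (show GRel k n F (.inr (.inr (.inr (.p2, z)))) (.inr (.inr (.inr (.q2, z)))) by
        exact trivial)⟩
    case r2 => exact .inr ⟨_, memA hk (.inr (.inr rfl)), adj_of_grel (by simp)
      (show GRel k n F (.inr (.inr (.inr (.p3, z)))) (.inr (.inr (.inr (.r2, z)))) by
        exact trivial)⟩

end Upper2
section Upper3
variable {k n : ℕ} {F : Fin n → Finset (Fin k)}

lemma S0_conn (hk : k % 2 = 1) (hF : ∀ j, (F j).Nonempty) :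
    ((graphGF k n F).induce ↑(S0 k n hk)).Connected := by
  set G := graphGF k n F with hG
  set S : Set (GVert k n) := ↑(S0 k n hk) with hS
  have hbase : u0vert k n ∈ S := by
    show _ ∈ (S0 k n hk); exact memH hk 0 (by omega)
  set base : ↥S := ⟨u0vert k n, hbase⟩ with hbasedef
  have step : ∀ (a b : ↥S), G.Adj a.val b.val → (G.induce S).Adj a b := by
    intro a b hab; exact hab
  have reachu : ∀ (m : ℕ) (hm : m ≤ 2 * n + 7),
      (G.induce S).Reachable ⟨_, memH hk m hm⟩ base := by
    intro m
    induction m with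
    | zero => intro hm; exact SimpleGraph.Reachable.refl _
    | succ m ih =>
      intro hm
      have hm' : m ≤ 2 * n + 7 := by omega
      refine SimpleGraph.Adj.reachable ?_ |>.trans (ih hm')
      refine (step ⟨_, memH hk m hm'⟩ ⟨_, memH hk (m+1) hm⟩ (adj_of_grel ?_
        (show GRel k n F (.inr (.inr (.inl (.u ⟨m, by omega⟩))))
          (.inr (.inr (.inl (.u ⟨m + 1, by omega⟩)))) by exact rfl))).symm
      simp only [ne_eq, Sum.inr.injEq, Sum.inl.injEq, HVert.u.injEq, Fin.mk.injEq]
      omega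
  have ha : ∀ i : Fin k,
      (G.induce S).Reachable ⟨Sum.inl (i, .a), memB hk (.inl rfl)⟩ base := by
    intro i
    exact (step base ⟨_, memB hk (.inl rfl)⟩ (adj_of_grel (by simp [u0vert, hbasedef])
      (show GRel k n F (.inr (.inr (.inl (.u ⟨0, by omega⟩)))) (.inl (i, .a)) by
        exact ⟨rfl, .inl rfl⟩))).reachable.symm
  have he : ∀ i : Fin k,
      (G.induce S).Reachable ⟨Sum.inl (i, .e), memB hk (.inr (.inl rfl))⟩ base := by
    intro i
    refine SimpleGraph.Adj.reachable ?_ |>.trans (ha i)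
    exact (step ⟨_, memB hk (.inl rfl)⟩ ⟨_, memB hk (.inr (.inl rfl))⟩ (adj_of_grel (by simp)
      (show GRel k n F (.inl (i, .a)) (.inl (i, .e)) by exact ⟨rfl, trivial⟩))).symm
  have hp1 : (G.induce S).Reachable
      ⟨Sum.inr (Sum.inr (Sum.inr (.p1, ⟨0, by omega⟩))), memA hk (.inl rfl)⟩ base := by
    exact (step ⟨_, memA hk (.inl rfl)⟩ base (adj_of_grel (by simp [u0vert, hbasedef])
      (show GRel k n F (.inr (.inr (.inr (.p1, ⟨0, by omega⟩))))
        (.inr (.inr (.inl (.u ⟨0, by omega⟩)))) by exact ⟨rfl, rfl⟩))).reachable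
  have hp2 : (G.induce S).Reachable
      ⟨Sum.inr (Sum.inr (Sum.inr (.p2, ⟨0, by omega⟩))), memA hk (.inr (.inl rfl))⟩ base := by
    refine SimpleGraph.Adj.reachable ?_ |>.trans hp1
    exact (step ⟨_, memA hk (.inl rfl)⟩ ⟨_, memA hk (.inr (.inl rfl))⟩ (adj_of_grel (by simp)
      (show GRel k n F (.inr (.inr (.inr (.p1, ⟨0, by omega⟩))))
        (.inr (.inr (.inr (.p2, ⟨0, by omega⟩)))) by exact trivial))).symm
  have reach : ∀ v : ↥S, (G.induce S).Reachable v base := by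
    rintro ⟨v, hv⟩
    have hv' : v ∈ S0 k n hk := hv
    simp only [S0, Finset.mem_union, SB, SC, SH, SA, Finset.mem_image] at hv'
    rcases hv' with ((⟨⟨i, bv⟩, hmem, rfl⟩ | ⟨j, -, rfl⟩) | ⟨m, -, rfl⟩) | ⟨p, hp, rfl⟩
    · simp only [Finset.mem_product, Finset.mem_insert, Finset.mem_singleton] at hmem
      rcases hmem.2 with rfl | rfl | rfl
      · exact ha i
      · exact he i
      · exact (step base ⟨_, memB hk (.inr (.inr rfl))⟩ (adj_of_grel (by simp [u0vert, hbasedef])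
          (show GRel k n F (.inr (.inr (.inl (.u ⟨0, by omega⟩)))) (.inl (i, .b)) by
            exact ⟨rfl, .inr rfl⟩))).reachable.symm
    · obtain ⟨i, hi⟩ := hF j
      refine SimpleGraph.Adj.reachable ?_ |>.trans (ha i)
      exact step ⟨_, memC hk⟩ ⟨_, memB hk (.inl rfl)⟩ (adj_of_grel (by simp)
        (show GRel k n F (.inr (.inl (j, .c))) (.inl (i, .a)) by exact ⟨hi, rfl, .inl rfl⟩))
    · exact reachu (m : ℕ) (by have := m.isLt; omega)
    · simp only [Finset.mem_insert, Finset.mem_singleton] at hp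
      rcases hp with rfl | rfl | rfl
      · exact hp1
      · exact hp2
      · refine SimpleGraph.Adj.reachable ?_ |>.trans hp2
        exact (step ⟨_, memA hk (.inr (.inl rfl))⟩ ⟨_, memA hk (.inr (.inr rfl))⟩
          (adj_of_grel (by simp)
          (show GRel k n F (.inr (.inr (.inr (.p2, ⟨0, by omega⟩))))
            (.inr (.inr (.inr (.p3, ⟨0, by omega⟩)))) by exact trivial))).symm
  rw [SimpleGraph.connected_iff]
  exact ⟨fun x y => (reach x).trans (reach y).symm, ⟨base⟩⟩

end Upper3
lemma lower_bound (k n : ℕ) (hk : k % 2 = 1) (hn : 1 ≤ n) (F : Fin n → Finset (Fin k))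
    {S : Set (GVert k n)} (hSdom : ∀ v, v ∈ S ∨ ∃ u ∈ S, (graphGF k n F).Adj u v)
    (hSconn : ((graphGF k n F).induce S).Connected) :
    3 * k + 3 * n + 11 ≤ S.ncard := by
  classical
  set G := graphGF k n F with hG
  have hfin : S.Finite := Set.toFinite S
  have hcardT : S.ncard = hfin.toFinset.card := Set.ncard_eq_toFinset_card S hfin
  set T : Finset (GVert k n) := hfin.toFinset with hT
  have hmemT : ∀ v, v ∈ T ↔ v ∈ S := fun v => hfin.mem_toFinset
  set z0 : Fin (k % 2) := ⟨0, by omega⟩ with hz0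
  have hzeq : ∀ z : Fin (k % 2), z = z0 := fun z => Fin.ext (by have := z.isLt; omega)
  -- an A-vertex in S from domination of r1
  obtain ⟨α, zα, hαmem, hαset⟩ : ∃ a z',
      (Sum.inr (Sum.inr (Sum.inr (a, z'))) : GVert k n) ∈ S ∧
        (a = .r1 ∨ a = .q1 ∨ a = .p2) := by
    rcases hSdom (Sum.inr (Sum.inr (Sum.inr (.r1, z0)))) with h | ⟨u, hu, hadj⟩
    · exact ⟨.r1, z0, h, .inl rfl⟩
    · obtain ⟨z', h'⟩ := adj_r1 hadj
      rcases h' with rfl | rfl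
      exacts [⟨.q1, z', hu, .inr (.inl rfl)⟩, ⟨.p2, z', hu, .inr (.inr rfl)⟩]
  obtain ⟨β, zβ, hβmem, hβset⟩ : ∃ a z',
      (Sum.inr (Sum.inr (Sum.inr (a, z'))) : GVert k n) ∈ S ∧
        (a = .r2 ∨ a = .q2 ∨ a = .p3) := by
    rcases hSdom (Sum.inr (Sum.inr (Sum.inr (.r2, z0)))) with h | ⟨u, hu, hadj⟩
    · exact ⟨.r2, z0, h, .inl rfl⟩
    · obtain ⟨z', h'⟩ := adj_r2 hadj
      rcases h' with rfl | rfl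
      exacts [⟨.q2, z', hu, .inr (.inl rfl)⟩, ⟨.p3, z', hu, .inr (.inr rfl)⟩]
  -- a deep H-vertex in S from domination of u_{2n+8}
  obtain ⟨vH, hvHmem, hvHphi⟩ : ∃ hv : HVert (2 * n + 7),
      (Sum.inr (Sum.inr (Sum.inl hv)) : GVert k n) ∈ S ∧
        2 * n + 8 ≤ phi (Sum.inr (Sum.inr (Sum.inl hv)) : GVert k n) := by
    rcases hSdom (Sum.inr (Sum.inr (Sum.inl (.u ⟨2 * n + 8, by omega⟩)))) with h | ⟨u, hu, hadj⟩
    · exact ⟨_, h, by simp [phi]⟩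
    · rw [adj_utop hadj] at hu
      exact ⟨_, hu, by simp [phi]⟩
  -- u0 ∈ S via boundary crossing from the A side to the H side
  have hu0 : u0vert k n ∈ S := by
    obtain ⟨w⟩ := hSconn.preconnected ⟨_, hαmem⟩ ⟨_, hvHmem⟩
    obtain ⟨d, hd, hdf, hds⟩ := w.exists_boundary_dart
      {x : ↥S | ∀ hv : HVert (2 * n + 7), x.val ≠ Sum.inr (Sum.inr (Sum.inl hv))}
      (by intro hv h; exact absurd h (by simp))
      (by simp only [Set.mem_setOf_eq]; push_neg; exact ⟨vH, rfl⟩)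
    simp only [Set.mem_setOf_eq] at hds
    push_neg at hds
    obtain ⟨hw', heq⟩ := hds
    have hGadj : G.Adj d.fst.val d.snd.val := d.adj
    rw [heq] at hGadj
    rcases adj_inrH hGadj with ⟨hv', hfeq, -⟩ | ⟨-, rfl⟩ | ⟨-, rfl⟩
    · exact absurd hfeq (hdf hv')
    · have := d.snd.property; rw [heq] at this; exact this
    · have := d.snd.property; rw [heq] at this; exact this
  -- p1 ∈ S via boundary crossing from the H side to the A side
  have hp1 : (Sum.inr (Sum.inr (Sum.inr (.p1, z0))) : GVert k n) ∈ S := by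
    obtain ⟨w⟩ := hSconn.preconnected ⟨_, hvHmem⟩ ⟨_, hαmem⟩
    obtain ⟨d, hd, hdf, hds⟩ := w.exists_boundary_dart
      {x : ↥S | ∀ (a : AVert) (z : Fin (k % 2)),
        x.val ≠ Sum.inr (Sum.inr (Sum.inr (a, z)))}
      (by intro a z h; exact absurd h (by simp))
      (by simp only [Set.mem_setOf_eq]; push_neg; exact ⟨α, zα, rfl⟩)
    simp only [Set.mem_setOf_eq] at hds
    push_neg at hds
    obtain ⟨aw, z, heq⟩ := hds
    have hGadj : G.Adj d.fst.val d.snd.val := d.adj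
    rw [heq] at hGadj
    rcases adj_inrA hGadj with ⟨aw', z', hfeq, -⟩ | ⟨-, rfl⟩
    · exact absurd hfeq (hdf aw' z')
    · have := d.snd.property; rw [heq, hzeq z] at this; exact this
  -- fiberwise counting
  have hfib := Finset.card_eq_sum_card_fiberwise
    (f := (key : GVert k n → Fin k ⊕ Fin n ⊕ Bool)) (s := T) (t := Finset.univ) (fun v _ => Finset.mem_univ _)
  -- B fibers
  have hB : ∀ i : Fin k, 3 ≤ (T.filter fun v => key v = .inl i).card := by
    intro i
    set U : Finset BVert := Finset.univ.filter
      (fun w => (Sum.inl (i, w) : GVert k n) ∈ S) with hU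
    have hUmem : ∀ w : BVert, w ∈ U ↔ (Sum.inl (i, w) : GVert k n) ∈ S := by
      intro w; simp [hU]
    have hUcard : U.card ≤ (T.filter fun v => key v = .inl i).card := by
      apply Finset.card_le_card_of_injOn (fun w => (Sum.inl (i, w) : GVert k n))
      · intro w hw
        exact Finset.mem_filter.2 ⟨(hmemT _).2 ((hUmem w).1 hw), rfl⟩
      · intro a _ b _ hab; simpa using hab
    refine le_trans (bvert_hit U ?_ ?_ ?_ ?_) hUcard
    · rcases hSdom (Sum.inl (i, .b')) with h | ⟨u, hu, hadj⟩
      · exact .inr ((hUmem _).2 h)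
      · rw [adj_b' hadj] at hu; exact .inl ((hUmem _).2 hu)
    · rcases hSdom (Sum.inl (i, .k)) with h | ⟨u, hu, hadj⟩
      · exact .inr (.inr ((hUmem _).2 h))
      · rcases adj_k hadj with rfl | rfl
        · exact .inl ((hUmem _).2 hu)
        · exact .inr (.inl ((hUmem _).2 hu))
    · rcases hSdom (Sum.inl (i, .g1)) with h | ⟨u, hu, hadj⟩
      · exact .inr (.inr ((hUmem _).2 h))
      · rcases adj_g1 hadj with rfl | rfl
        · exact .inl ((hUmem _).2 hu)
        · exact .inr (.inl ((hUmem _).2 hu))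
    · rcases hSdom (Sum.inl (i, .g2)) with h | ⟨u, hu, hadj⟩
      · exact .inr (.inr ((hUmem _).2 h))
      · rcases adj_g2 hadj with rfl | rfl
        · exact .inl ((hUmem _).2 hu)
        · exact .inr (.inl ((hUmem _).2 hu))
  -- C fibers
  have hC : ∀ j : Fin n, 1 ≤ (T.filter fun v => key v = .inr (.inl j)).card := by
    intro j
    apply Finset.card_pos.2
    rcases hSdom (Sum.inr (Sum.inl (j, .d))) with h | ⟨u, hu, hadj⟩
    · exact ⟨_, Finset.mem_filter.2 ⟨(hmemT _).2 h, rfl⟩⟩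
    · rw [adj_d hadj] at hu
      exact ⟨_, Finset.mem_filter.2 ⟨(hmemT _).2 hu, rfl⟩⟩
  -- H fiber
  have hH : 2 * n + 8 ≤ (T.filter fun v => key v = .inr (.inr true)).card := by
    obtain ⟨w2⟩ := hSconn.preconnected ⟨_, hu0⟩ ⟨_, hvHmem⟩
    have hlip : ∀ {x y : ↥S}, (G.induce S).Adj x y →
        phi y.val ≤ phi x.val + 1 := fun h => adj_phi h
    have hsub : Finset.Icc 1 (2 * n + 8) ⊆
        (T.filter fun v => key v = .inr (.inr true)).image phi := by
      intro m hm
      rw [Finset.mem_Icc] at hm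
      obtain ⟨v, hvsup, hvphi⟩ := walk_exists_value (fun x : ↥S => phi x.val)
        hlip w2 m (by simpa [u0vert, phi] using hm.1) (le_trans hm.2 hvHphi)
      refine Finset.mem_image.2 ⟨v.val, Finset.mem_filter.2
        ⟨(hmemT _).2 v.property, key_of_phi_pos (by omega)⟩, hvphi⟩
    calc 2 * n + 8 = (Finset.Icc 1 (2 * n + 8)).card := by rw [Nat.card_Icc]; omega
      _ ≤ ((T.filter fun v => key v = .inr (.inr true)).image phi).card :=
          Finset.card_le_card hsub
      _ ≤ _ := Finset.card_image_le
  -- A fiber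
  have hA : 3 ≤ (T.filter fun v => key v = .inr (.inr false)).card := by
    rw [hzeq zα] at hαmem
    rw [hzeq zβ] at hβmem
    apply three_le_card (x := (Sum.inr (Sum.inr (Sum.inr (.p1, z0))) : GVert k n))
      (y := Sum.inr (Sum.inr (Sum.inr (α, z0)))) (z := Sum.inr (Sum.inr (Sum.inr (β, z0))))
    · exact Finset.mem_filter.2 ⟨(hmemT _).2 hp1, rfl⟩
    · exact Finset.mem_filter.2 ⟨(hmemT _).2 hαmem, rfl⟩
    · exact Finset.mem_filter.2 ⟨(hmemT _).2 hβmem, rfl⟩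
    · rcases hαset with rfl | rfl | rfl <;> simp
    · rcases hβset with rfl | rfl | rfl <;> simp
    · rcases hαset with rfl | rfl | rfl <;> rcases hβset with rfl | rfl | rfl <;> simp
  -- assemble
  rw [hcardT, hfib, Fintype.sum_sum_type, Fintype.sum_sum_type]
  have e1 : 3 * k ≤ ∑ i : Fin k, (T.filter fun v => key v = .inl i).card := by
    calc 3 * k = ∑ _i : Fin k, 3 := by simp [Finset.sum_const, mul_comm]
      _ ≤ _ := Finset.sum_le_sum (fun i _ => hB i)
  have e2 : n ≤ ∑ j : Fin n, (T.filter fun v => key v = .inr (.inl j)).card := by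
    calc n = ∑ _j : Fin n, 1 := by simp
      _ ≤ _ := Finset.sum_le_sum (fun j _ => hC j)
  have e3 : 2 * n + 11 ≤ ∑ b : Bool, (T.filter fun v => key v = .inr (.inr b)).card := by
    rw [Fintype.sum_bool]
    omega
  omega
theorem connDomNum_graphGF_of_odd (k n : ℕ) (hkodd : Odd k)
    (hn : 1 ≤ n) (F : Fin n → Finset (Fin k)) (hF : ∀ j, (F j).Nonempty) :
    connDomNum (graphGF k n F) = 3 * k + 3 * n + 11 := by
  have hk : k % 2 = 1 := Nat.odd_iff.1 hkodd
  have hmem : (3 * k + 3 * n + 11) ∈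
      {m | ∃ S : Set (GVert k n), IsConnDomSet (graphGF k n F) S ∧ S.ncard = m} :=
    ⟨↑(S0 k n hk), ⟨S0_dom hk hF, S0_conn hk hF⟩, by
      rw [Set.ncard_coe_finset]; exact card_S0 hk⟩
  apply le_antisymm
  · exact Nat.sInf_le hmem
  · apply le_csInf ⟨_, hmem⟩
    rintro m ⟨S, hS, rfl⟩
    exact lower_bound k n hk hn F hS.1 hS.2

end CDG
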